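/- Let 1 ≤ j and ℓ ≥ 1 with j + ℓ ≤ k, and suppose b_j > a_{j+1} = b_{j+1} = ⋯ = a_{j+ℓ} = b_{j+ℓ} > a_{j+ℓ+1}. Then every z = (z₁, …, z_k) ∈ Ã_{k+1}(a, b) satisfies z_{j+1} = z_{j+2} = ⋯ = z_{j+ℓ} = 0. -/

import Mathlib

open Polynomial

section auxlemmas
open Equiv

lemma det_arrow {R : Type*} [CommRing R] {n : ℕ}
    (N : Matrix (Fin (n+1)) (Fin (n+1)) R)
    (h0 : ∀ i j : Fin (n+1), (i:ℕ) < n → (j:ℕ) < n → i ≠ j → N i j = 0) :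
    N.det = (∏ i : Fin n, N i.castSucc i.castSucc) * N (Fin.last n) (Fin.last n)
      - ∑ i : Fin n, N (Fin.last n) i.castSucc * N i.castSucc (Fin.last n)
          * ∏ m ∈ Finset.univ.erase i, N m.castSucc m.castSucc := by
  classical
  have hcast : ∀ i : Fin n, (i.castSucc : Fin (n+1)) ≠ Fin.last n :=
    fun i => (Fin.castSucc_lt_last i).ne
  have hlast : ∀ x : Fin (n+1), (x:ℕ) < n → x ≠ Fin.last n := fun x hx h => by
    rw [h] at hx; simp at hx
  have hne_last : ∀ x : Fin (n+1), x ≠ Fin.last n → (x:ℕ) < n := fun x hx => by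
    have h1 := x.isLt
    rcases Nat.lt_or_ge (x:ℕ) n with h | h
    · exact h
    · exact absurd (Fin.ext (by simp only [Fin.val_last]; omega : (x:ℕ) = (Fin.last n : Fin (n+1)).val)) hx
  set T : Finset (Perm (Fin (n+1))) :=
    insert 1 (Finset.univ.image fun i : Fin n => Equiv.swap i.castSucc (Fin.last n)) with hT
  have hswap_inj : Function.Injective
      (fun i : Fin n => Equiv.swap i.castSucc (Fin.last n)) := by
    intro i i' h
    have := congrArg (fun σ : Perm (Fin (n+1)) => σ (Fin.last n)) h
    simp only [Equiv.swap_apply_right] at this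
    exact Fin.castSucc_injective n this
  have hone : (1 : Perm (Fin (n+1))) ∉
      (Finset.univ.image fun i : Fin n => Equiv.swap i.castSucc (Fin.last n)) := by
    simp only [Finset.mem_image, Finset.mem_univ, true_and]
    rintro ⟨i, hi⟩
    have := congrArg (fun σ : Perm (Fin (n+1)) => σ (Fin.last n)) hi
    simp only [Equiv.swap_apply_right, Perm.one_apply] at this
    exact (hcast i) this
  rw [Matrix.det_apply]
  rw [← Finset.sum_subset (Finset.subset_univ T) (fun σ _ hσ => ?_)]
  · rw [hT, Finset.sum_insert hone, Finset.sum_image (fun i _ i' _ h => hswap_inj h)]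
    have h2 : ∀ i : Fin n,
        Perm.sign (Equiv.swap i.castSucc (Fin.last n)) •
          ∏ m : Fin (n+1), N ((Equiv.swap i.castSucc (Fin.last n)) m) m
        = -(N (Fin.last n) i.castSucc * N i.castSucc (Fin.last n)
            * ∏ m ∈ Finset.univ.erase i, N m.castSucc m.castSucc) := by
      intro i
      rw [Perm.sign_swap (hcast i)]
      have hprod : ∏ m : Fin (n+1), N (Equiv.swap i.castSucc (Fin.last n) m) m
          = N (Fin.last n) i.castSucc * N i.castSucc (Fin.last n)
            * ∏ m ∈ Finset.univ.erase i, N m.castSucc m.castSucc := by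
        rw [Fin.prod_univ_castSucc, Equiv.swap_apply_right,
          ← Finset.mul_prod_erase Finset.univ _ (Finset.mem_univ i),
          Equiv.swap_apply_left]
        have h3 : ∀ m ∈ Finset.univ.erase i,
            N ((Equiv.swap i.castSucc (Fin.last n)) m.castSucc) m.castSucc
            = N m.castSucc m.castSucc := fun m hm => by
          rw [Equiv.swap_apply_of_ne_of_ne
            (fun h => (Finset.mem_erase.mp hm).1 (Fin.castSucc_injective n h)) (hcast m)]
        rw [Finset.prod_congr rfl h3]
        ring
      rw [hprod]
      simp [Units.smul_def]
    rw [Finset.sum_congr rfl (fun i _ => h2 i), Finset.sum_neg_distrib, ← sub_eq_add_neg]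
    congr 1
    simp only [Perm.sign_one, one_smul, Perm.one_apply]
    rw [Fin.prod_univ_castSucc]
  · -- σ ∉ T → term is zero
    rcases Classical.em (∀ i : Fin (n+1), (i:ℕ) < n → σ i = i ∨ σ i = Fin.last n)
      with hgood | hbad
    · exfalso
      apply hσ
      rw [hT, Finset.mem_insert]
      by_cases hid : ∀ i : Fin (n+1), (i:ℕ) < n → σ i = i
      · left
        have hfix : σ (Fin.last n) = Fin.last n := by
          by_contra hne
          have h1 : (σ (Fin.last n) : ℕ) < n := hne_last _ hne
          exact hne (σ.injective (hid (σ (Fin.last n)) h1))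
        ext x
        rcases Classical.em ((x:ℕ) < n) with hx | hx
        · simp [hid x hx]
        · have hxl : x = Fin.last n := by
            have := x.isLt
            exact Fin.ext (by simp only [Fin.val_last]; omega)
          simp [hxl, hfix]
      · right
        push_neg at hid
        obtain ⟨i0, hi0n, hi0⟩ := hid
        have hσi0 : σ i0 = Fin.last n := (hgood i0 hi0n).resolve_left hi0
        have hσlast : σ (Fin.last n) = i0 := by
          by_contra hne
          have hnl : σ (Fin.last n) ≠ Fin.last n := by
            intro h
            exact (hlast i0 hi0n) (σ.injective (hσi0.trans h.symm))
          have h1 : (σ (Fin.last n) : ℕ) < n := hne_last _ hnl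
          -- consider y = σ⁻¹ i0
          have hy : σ (σ.symm i0) = i0 := σ.apply_symm_apply i0
          rcases Classical.em (σ.symm i0 = Fin.last n) with hyl | hyl
          · exact hne (by rw [← hyl]; exact hy)
          · have h2 : (σ.symm i0 : ℕ) < n := hne_last _ hyl
            rcases hgood _ h2 with h | h
            · rw [hy] at h
              rw [← h] at hy
              exact hi0 hy
            · rw [hy] at h
              exact (hlast i0 hi0n) h
        rw [Finset.mem_image]
        refine ⟨⟨(i0:ℕ), hi0n⟩, Finset.mem_univ _, ?_⟩
        have hi0c : (⟨(i0:ℕ), hi0n⟩ : Fin n).castSucc = i0 := Fin.ext rfl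
        rw [hi0c]
        ext x : 1
        rcases Classical.em (x = i0) with rfl | hx
        · rw [Equiv.swap_apply_left, hσi0]
        · rcases Classical.em (x = Fin.last n) with rfl | hxl
          · rw [Equiv.swap_apply_right, hσlast]
          · rw [Equiv.swap_apply_of_ne_of_ne hx hxl]
            have hxn : (x:ℕ) < n := hne_last x hxl
            rcases hgood x hxn with h | h
            · exact h.symm
            · exact absurd (σ.injective (h.trans hσi0.symm)) hx
    · push_neg at hbad
      obtain ⟨i, hin, hi1, hi2⟩ := hbad
      have hσin : (σ i : ℕ) < n := hne_last _ hi2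
      have hz : N (σ i) i = 0 := h0 (σ i) i hσin hin hi1
      rw [smul_eq_zero_of_right]
      exact Finset.prod_eq_zero (Finset.mem_univ i) hz

end auxlemmas


/-- The `(k+1) × (k+1)` Hermitian "arrow" matrix whose upper-left `k × k` block is
`diag(b 1, …, b k)`, whose `(i, k+1)` entry is `conj (z i)` and `(k+1, i)` entry is `z i`
for `1 ≤ i ≤ k` (1-based indexing of the sequences), and whose `(k+1, k+1)` entry is `w`. -/
def Zarrow (k : ℕ) (b : ℕ → ℝ) (w : ℝ) (z : ℕ → ℂ) :
    Matrix (Fin (k + 1)) (Fin (k + 1)) ℂ :=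
  Matrix.of fun i j =>
    if (i : ℕ) < k then
      if (j : ℕ) < k then (if i = j then (b ((i : ℕ) + 1) : ℂ) else 0)
      else (starRingEnd ℂ) (z ((i : ℕ) + 1))
    else
      if (j : ℕ) < k then z ((j : ℕ) + 1)
      else (w : ℂ)

/-- The matrix `Z_{(a,b)}(z)`: the arrow matrix with corner entry
`z_{k+1} = Σ_{i=1}^{k+1} aᵢ − Σ_{i=1}^{k} bᵢ`. -/
def Zab (k : ℕ) (a b : ℕ → ℝ) (z : ℕ → ℂ) : Matrix (Fin (k + 1)) (Fin (k + 1)) ℂ :=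
  Zarrow k b ((∑ i ∈ Finset.Icc 1 (k + 1), a i) - ∑ i ∈ Finset.Icc 1 k, b i) z

/-- `Ã_{k+1}(a, b)`: those `z` (with relevant coordinates `z 1, …, z k`) for which
`Z_{(a,b)}(z)` has characteristic polynomial `∏_{i=1}^{k+1}(X − aᵢ)`. -/
def Atilde (k : ℕ) (a b : ℕ → ℝ) : Set (ℕ → ℂ) :=
  {z | (Zab k a b z).charpoly = ∏ i ∈ Finset.Icc 1 (k + 1), (X - C (a i : ℂ))}

lemma charpoly_Zarrow (k : ℕ) (b : ℕ → ℝ) (w : ℝ) (z : ℕ → ℂ) :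
    (Zarrow k b w z).charpoly
      = (∏ i : Fin k, (X - C ((b ((i:ℕ)+1) : ℝ) : ℂ))) * (X - C ((w:ℝ) : ℂ))
        - ∑ i : Fin k, C ((Complex.normSq (z ((i:ℕ)+1)) : ℝ) : ℂ)
            * ∏ m ∈ Finset.univ.erase i, (X - C ((b ((m:ℕ)+1) : ℝ) : ℂ)) := by
  classical
  have hlastv : ((Fin.last k : Fin (k+1)) : ℕ) = k := rfl
  have hZdiag : ∀ i : Fin k, Zarrow k b w z i.castSucc i.castSucc = ((b ((i:ℕ)+1) : ℝ) : ℂ) := by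
    intro i
    simp [Zarrow, Matrix.of_apply, i.is_lt]
  have hZcorner : Zarrow k b w z (Fin.last k) (Fin.last k) = ((w:ℝ) : ℂ) := by
    simp [Zarrow, Matrix.of_apply]
  have hZrow : ∀ i : Fin k, Zarrow k b w z (Fin.last k) i.castSucc = z ((i:ℕ)+1) := by
    intro i
    simp [Zarrow, Matrix.of_apply, i.is_lt]
  have hZcol : ∀ i : Fin k, Zarrow k b w z i.castSucc (Fin.last k)
      = (starRingEnd ℂ) (z ((i:ℕ)+1)) := by
    intro i
    simp [Zarrow, Matrix.of_apply, i.is_lt]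
  have hZoff : ∀ i j : Fin (k+1), (i:ℕ) < k → (j:ℕ) < k → i ≠ j → Zarrow k b w z i j = 0 := by
    intro i j hi hj hij
    simp [Zarrow, Matrix.of_apply, hi, hj, hij]
  rw [Matrix.charpoly, det_arrow _ (fun i j hi hj hij => by
    rw [Matrix.charmatrix_apply_ne _ _ _ hij, hZoff i j hi hj hij, map_zero, neg_zero])]
  have hc : ∀ i : Fin k, (Zarrow k b w z).charmatrix i.castSucc i.castSucc
      = X - C ((b ((i:ℕ)+1) : ℝ) : ℂ) := fun i => by
    rw [Matrix.charmatrix_apply_eq, hZdiag]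
  have hcl : (Zarrow k b w z).charmatrix (Fin.last k) (Fin.last k) = X - C ((w:ℝ) : ℂ) := by
    rw [Matrix.charmatrix_apply_eq, hZcorner]
  have hne : ∀ i : Fin k, (Fin.last k : Fin (k+1)) ≠ i.castSucc :=
    fun i => (Fin.castSucc_lt_last i).ne'
  refine congrArg₂ HSub.hSub ?_ ?_
  · rw [Finset.prod_congr rfl (fun i _ => hc i), hcl]
  · refine Finset.sum_congr rfl fun i _ => ?_
    rw [Matrix.charmatrix_apply_ne _ _ _ (hne i), Matrix.charmatrix_apply_ne _ _ _ (hne i).symm,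
      hZrow, hZcol, Finset.prod_congr rfl (fun m _ => hc m)]
    congr 1
    rw [neg_mul_neg, ← map_mul, Complex.mul_conj]

/-- case (3).  Suppose `1 ≤ j`, `ℓ ≥ 1`, `j + ℓ ≤ k` and
`b_j > a_{j+1} = b_{j+1} = ⋯ = a_{j+ℓ} = b_{j+ℓ} > a_{j+ℓ+1}` (1-based).
Then every `z ∈ Ã_{k+1}(a,b)` satisfies `z_{j+1} = ⋯ = z_{j+ℓ} = 0`. -/
theorem statement5 (k : ℕ) (hk : 1 ≤ k) (a b : ℕ → ℝ)
    (hab : ∀ i, 1 ≤ i → i ≤ k → b i ≤ a i ∧ a (i + 1) ≤ b i)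
    (j l : ℕ) (hj : 1 ≤ j) (hl : 1 ≤ l) (hjl : j + l ≤ k)
    (hlt1 : a (j + 1) < b j)
    (heq : ∀ m, j + 1 ≤ m → m ≤ j + l → a m = a (j + 1) ∧ b m = a (j + 1))
    (hlt2 : a (j + l + 1) < a (j + 1)) :
    ∀ z ∈ Atilde k a b, ∀ m, j + 1 ≤ m → m ≤ j + l → z m = 0 := by
  classical
  obtain ⟨n, rfl⟩ : ∃ n, l = n + 1 := ⟨l - 1, by omega⟩
  intro z hz m hm1 hm2
  set lam : ℝ := a (j + 1) with hlam
  -- monotone chains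
  have bchain : ∀ i2 i1, 1 ≤ i1 → i1 ≤ i2 → i2 ≤ k → b i2 ≤ b i1 := by
    intro i2
    induction i2 with
    | zero => intro i1 h1 h12 _; omega
    | succ nn ih =>
      intro i1 h1 h12 h2k
      rcases Nat.eq_or_lt_of_le h12 with h | hlt
      · rw [← h]
      · calc b (nn + 1) ≤ a (nn + 1) := (hab (nn + 1) (by omega) h2k).1
          _ ≤ b nn := (hab nn (by omega) (by omega)).2
          _ ≤ b i1 := ih i1 h1 (by omega) (by omega)
  have achain : ∀ i2 i1, 1 ≤ i1 → i1 ≤ i2 → i2 ≤ k + 1 → a i2 ≤ a i1 := by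
    intro i2
    induction i2 with
    | zero => intro i1 h1 h12 _; omega
    | succ nn ih =>
      intro i1 h1 h12 h2k
      rcases Nat.eq_or_lt_of_le h12 with h | hlt
      · rw [← h]
      · calc a (nn + 1) ≤ b nn := (hab nn (by omega) (by omega)).2
          _ ≤ a nn := (hab nn (by omega) (by omega)).1
          _ ≤ a i1 := ih i1 h1 (by omega) (by omega)
  -- the index set S
  have hSbound : ∀ x ∈ Finset.Ico j (j + (n+1)), x < k := fun x hx => by
    simp only [Finset.mem_Ico] at hx; omega
  set S : Finset (Fin k) := (Finset.Ico j (j + (n+1))).attachFin hSbound with hSdef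
  have hS : ∀ i : Fin k, i ∈ S ↔ j ≤ (i:ℕ) ∧ (i:ℕ) < j + (n+1) := fun i => by
    rw [hSdef, Finset.mem_attachFin, Finset.mem_Ico]
  have hScard : S.card = n + 1 := by
    rw [hSdef, Finset.card_attachFin, Nat.card_Ico]; omega
  have hbS : ∀ i ∈ S, b ((i:ℕ) + 1) = lam := fun i hi => by
    obtain ⟨h1, h2⟩ := (hS i).mp hi
    exact (heq ((i:ℕ) + 1) (by omega) (by omega)).2
  have hbSc : ∀ i : Fin k, i ∈ Sᶜ → b ((i:ℕ) + 1) ≠ lam := by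
    intro i hi
    rw [Finset.mem_compl, hS] at hi
    push_neg at hi
    rcases Nat.lt_or_ge (i:ℕ) j with hlo | hhi
    · have h1 : b j ≤ b ((i:ℕ) + 1) := bchain j ((i:ℕ)+1) (by omega) (by omega) (by omega)
      have := lt_of_lt_of_le hlt1 h1
      exact fun h => absurd (h ▸ this) (lt_irrefl _)
    · have h2 : j + (n+1) ≤ (i:ℕ) := hi hhi
      have h3 : b ((i:ℕ)+1) ≤ a ((i:ℕ)+1) := (hab ((i:ℕ)+1) (by omega) (by omega)).1
      have h4 : a ((i:ℕ)+1) ≤ a (j + (n+1) + 1) :=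
        achain ((i:ℕ)+1) (j + (n+1) + 1) (by omega) (by omega) (by omega)
      have := lt_of_le_of_lt (h3.trans h4) hlt2
      exact fun h => absurd (h ▸ this) (lt_irrefl _)
  -- polynomial setup
  set w : ℝ := (∑ i ∈ Finset.Icc 1 (k + 1), a i) - ∑ i ∈ Finset.Icc 1 k, b i with hw
  set p : ℂ[X] := X - C ((lam : ℝ) : ℂ) with hp
  set Q : ℂ[X] := ∏ i ∈ Sᶜ, (X - C ((b ((i:ℕ)+1) : ℝ) : ℂ)) with hQ
  set R : ℂ[X] := ∏ i ∈ Finset.Icc 1 (k + 1) \ Finset.Icc (j+1) (j+(n+1)),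
      (X - C ((a i : ℝ) : ℂ)) with hR
  set cS : ℂ := ∑ i ∈ S, ((Complex.normSq (z ((i:ℕ)+1)) : ℝ) : ℂ) with hcS
  set T2 : ℂ[X] := ∑ i ∈ Sᶜ, C ((Complex.normSq (z ((i:ℕ)+1)) : ℝ) : ℂ)
      * ∏ m ∈ Sᶜ.erase i, (X - C ((b ((m:ℕ)+1) : ℝ) : ℂ)) with hT2
  have E0 : (∏ i : Fin k, (X - C ((b ((i:ℕ)+1) : ℝ) : ℂ))) * (X - C ((w:ℝ) : ℂ))
      - ∑ i : Fin k, C ((Complex.normSq (z ((i:ℕ)+1)) : ℝ) : ℂ)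
          * ∏ m ∈ Finset.univ.erase i, (X - C ((b ((m:ℕ)+1) : ℝ) : ℂ))
      = ∏ i ∈ Finset.Icc 1 (k + 1), (X - C ((a i : ℝ) : ℂ)) := by
    rw [← charpoly_Zarrow]
    exact hz
  -- factorization of the full b-product
  have F1 : (∏ i : Fin k, (X - C ((b ((i:ℕ)+1) : ℝ) : ℂ))) = p ^ (n+1) * Q := by
    rw [← Finset.prod_mul_prod_compl S, ← hQ]
    congr 1
    rw [Finset.prod_congr rfl (fun i hi => by rw [hbS i hi]), Finset.prod_const, hScard]
  -- factorization of erase-products, i ∈ S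
  have F3 : ∀ i ∈ S, (∏ m ∈ Finset.univ.erase i, (X - C ((b ((m:ℕ)+1) : ℝ) : ℂ)))
      = p ^ n * Q := by
    intro i hi
    have hsplit : Finset.univ.erase i = (S.erase i) ∪ Sᶜ := by
      ext x
      simp only [Finset.mem_erase, Finset.mem_univ, and_true, Finset.mem_union,
        Finset.mem_compl]
      constructor
      · intro h
        by_cases hx : x ∈ S
        · exact Or.inl ⟨h, hx⟩
        · exact Or.inr hx
      · rintro (⟨h, _⟩ | hx)
        · exact h
        · intro h; subst h; exact hx hi
    have hdisj : Disjoint (S.erase i) Sᶜ := by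
      rw [Finset.disjoint_left]
      intro x hx hxc
      exact (Finset.mem_compl.mp hxc) (Finset.mem_of_mem_erase hx)
    rw [hsplit, Finset.prod_union hdisj, ← hQ]
    congr 1
    rw [Finset.prod_congr rfl (fun m hm => by rw [hbS m (Finset.mem_of_mem_erase hm)]),
      Finset.prod_const, Finset.card_erase_of_mem hi, hScard, ← hp, Nat.add_sub_cancel]
  -- factorization of erase-products, i ∈ Sᶜ
  have F4 : ∀ i ∈ Sᶜ, (∏ m ∈ Finset.univ.erase i, (X - C ((b ((m:ℕ)+1) : ℝ) : ℂ)))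
      = p ^ (n+1) * ∏ m ∈ Sᶜ.erase i, (X - C ((b ((m:ℕ)+1) : ℝ) : ℂ)) := by
    intro i hi
    have hiS : i ∉ S := Finset.mem_compl.mp hi
    have hsplit : Finset.univ.erase i = S ∪ (Sᶜ.erase i) := by
      ext x
      simp only [Finset.mem_erase, Finset.mem_univ, and_true, Finset.mem_union,
        Finset.mem_compl]
      constructor
      · intro h
        by_cases hx : x ∈ S
        · exact Or.inl hx
        · exact Or.inr ⟨h, hx⟩
      · rintro (hx | ⟨h, _⟩)
        · intro h; subst h; exact hiS hx
        · exact h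
    have hdisj : Disjoint S (Sᶜ.erase i) := by
      rw [Finset.disjoint_left]
      intro x hx hxc
      exact (Finset.mem_compl.mp (Finset.mem_of_mem_erase hxc)) hx
    rw [hsplit, Finset.prod_union hdisj]
    congr 1
    rw [Finset.prod_congr rfl (fun m hm => by rw [hbS m hm]), Finset.prod_const, hScard]
  -- split the sum
  have Esum : ∑ i : Fin k, C ((Complex.normSq (z ((i:ℕ)+1)) : ℝ) : ℂ)
        * ∏ m ∈ Finset.univ.erase i, (X - C ((b ((m:ℕ)+1) : ℝ) : ℂ))
      = C cS * (p ^ n * Q) + p ^ (n+1) * T2 := by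
    rw [← Finset.sum_add_sum_compl S]
    refine congrArg₂ HAdd.hAdd ?_ ?_
    · rw [Finset.sum_congr rfl (fun i hi => by rw [F3 i hi]), ← Finset.sum_mul, hcS, map_sum]
    · rw [hT2, Finset.mul_sum]
      refine Finset.sum_congr rfl fun i hi => ?_
      rw [F4 i hi]; ring
  -- factorization of the a-product
  have hsub : Finset.Icc (j+1) (j+(n+1)) ⊆ Finset.Icc 1 (k+1) := by
    intro x hx
    simp only [Finset.mem_Icc] at hx ⊢
    omega
  have F2 : ∏ i ∈ Finset.Icc 1 (k + 1), (X - C ((a i : ℝ) : ℂ)) = p ^ (n+1) * R := by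
    rw [← Finset.prod_sdiff hsub, ← hR]
    have hmid : ∏ i ∈ Finset.Icc (j+1) (j+(n+1)), (X - C ((a i : ℝ) : ℂ)) = p ^ (n+1) := by
      have h1 : ∀ i ∈ Finset.Icc (j+1) (j+(n+1)), (X - C ((a i : ℝ) : ℂ)) = p := by
        intro i hi
        rw [Finset.mem_Icc] at hi
        rw [(heq i hi.1 hi.2).1, hp]
      rw [Finset.prod_congr rfl h1, Finset.prod_const, Nat.card_Icc]
      congr 1
      omega
    rw [hmid]
    ring
  rw [F1, Esum, F2] at E0
  -- cancel p ^ n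
  have key : p ^ n * (p * Q * (X - C ((w:ℝ) : ℂ)) - C cS * Q - p * T2 - p * R) = 0 := by
    linear_combination E0
  have hpne : p ≠ 0 := X_sub_C_ne_zero _
  have hA : p * Q * (X - C ((w:ℝ) : ℂ)) - C cS * Q - p * T2 - p * R = 0 :=
    (mul_eq_zero.mp key).resolve_left (pow_ne_zero n hpne)
  -- evaluate at lam
  have hev := congrArg (Polynomial.eval ((lam : ℝ) : ℂ)) hA
  have hpev : p.eval ((lam : ℝ) : ℂ) = 0 := by
    rw [hp]; simp
  simp only [eval_sub, eval_mul, hpev, eval_zero, zero_mul, mul_zero, zero_sub, sub_zero,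
    neg_eq_zero, eval_C] at hev
  have hQev : Q.eval ((lam : ℝ) : ℂ) ≠ 0 := by
    rw [hQ, eval_prod]
    refine Finset.prod_ne_zero_iff.mpr fun i hi => ?_
    simp only [eval_sub, eval_X, eval_C, sub_ne_zero]
    intro h
    exact hbSc i hi (Complex.ofReal_inj.mp h.symm)
  have hcS0 : cS = 0 := by
    rcases mul_eq_zero.mp hev with h | h
    · exact h
    · exact absurd h hQev
  -- conclude
  have hreal : ∑ i ∈ S, Complex.normSq (z ((i:ℕ)+1)) = 0 := by
    have : (((∑ i ∈ S, Complex.normSq (z ((i:ℕ)+1))) : ℝ) : ℂ) = 0 := by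
      push_cast
      exact hcS0
    exact_mod_cast this
  have hall : ∀ i ∈ S, Complex.normSq (z ((i:ℕ)+1)) = 0 := fun i hi =>
    (Finset.sum_eq_zero_iff_of_nonneg fun _ _ => Complex.normSq_nonneg _).mp hreal i hi
  have hmk : m - 1 < k := by omega
  have hiS : (⟨m - 1, hmk⟩ : Fin k) ∈ S := (hS _).mpr
    ⟨by simp only [Fin.val_mk]; omega, by simp only [Fin.val_mk]; omega⟩
  have := hall _ hiS
  simp only at this
  have hmm : (m - 1) + 1 = m := by omega
  rw [hmm] at this
  exact Complex.normSq_eq_zero.mp this
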